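/- Let n be a nonnegative integer and let a, c be complex numbers with (a−n)_{2n} ≠ 0, (1−a)_n ≠ 0, and (1+2c−a)_{2n} ≠ 0. Then _3F_2(−n, a, c ; (a−n)/2, (1+a−n)/2 ; 1/4) = [(1+2c−a)_n / (1−a)_n] · _3F_2(−n, 1+2c−a+n, c ; (1+2c−a)/2, (2+2c−a)/2 ; 1/4), both sides being finite sums over k from 0 to n. -/

import Mathlib

open Finset

/-- The rising factorial (Pochhammer symbol) `(a)_k = a(a+1)⋯(a+k-1)`. -/
noncomputable def poch (a : ℂ) (k : ℕ) : ℂ := ∏ i ∈ Finset.range k, (a + i)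

lemma poch_zero (a : ℂ) : poch a 0 = 1 := by simp [poch]

lemma poch_succ (a : ℂ) (k : ℕ) : poch a (k + 1) = poch a k * (a + k) := by
  simp [poch, Finset.prod_range_succ]

lemma poch_succ' (a : ℂ) (k : ℕ) : poch a (k + 1) = a * poch (a + 1) k := by
  rw [poch, Finset.prod_range_succ']
  simp only [Nat.cast_zero, add_zero, poch]
  rw [mul_comm]
  congr 1
  refine Finset.prod_congr rfl fun i _ => ?_
  push_cast; ring

lemma poch_add (a : ℂ) (m : ℕ) : ∀ n : ℕ, poch a (m + n) = poch a m * poch (a + m) n := by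
  intro n
  induction n with
  | zero => simp [poch_zero]
  | succ n ih =>
    rw [← Nat.add_assoc, poch_succ, ih, poch_succ, mul_assoc]
    congr 2
    push_cast; ring

lemma poch_ne_zero_of_le {a : ℂ} {m n : ℕ} (h : m ≤ n) (hn : poch a n ≠ 0) : poch a m ≠ 0 := by
  obtain ⟨d, rfl⟩ := Nat.exists_eq_add_of_le h
  rw [poch_add] at hn
  exact left_ne_zero_of_mul hn

lemma poch_reflect (a : ℂ) (n : ℕ) : poch a n = (-1) ^ n * poch (1 - a - n) n := by
  have key : poch (1 - a - n) n = (-1) ^ n * poch a n := by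
    rw [poch, ← Finset.prod_range_reflect]
    have : ((-1 : ℂ)) ^ n * poch a n = ∏ i ∈ range n, (-1 * (a + i)) := by
      rw [Finset.prod_mul_distrib, Finset.prod_const, poch, Finset.card_range]
    rw [this]
    refine Finset.prod_congr rfl fun i hi => ?_
    rw [Finset.mem_range] at hi
    have hc : ((n - 1 - i : ℕ) : ℂ) = (n : ℂ) - 1 - i := by
      rw [Nat.sub_sub, Nat.cast_sub (by omega)]
      push_cast; ring
    rw [hc]; ring
  rw [key, ← mul_assoc, ← mul_pow]
  simp

lemma poch_dup (a : ℂ) (k : ℕ) :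
    poch a (2 * k) = 4 ^ k * poch (a / 2) k * poch ((a + 1) / 2) k := by
  induction k with
  | zero => simp [poch_zero]
  | succ k ih =>
    have h2 : 2 * (k + 1) = 2 * k + 1 + 1 := by ring
    rw [h2, poch_succ, poch_succ, ih, poch_succ, poch_succ]
    push_cast
    ring

lemma poch_neg_nat (n : ℕ) : ∀ k : ℕ, k ≤ n →
    poch (-(n : ℂ)) k = (-1) ^ k * (Nat.factorial k : ℂ) * (n.choose k : ℂ) := by
  intro k
  induction k with
  | zero => simp [poch_zero]
  | succ k ih =>
    intro hk
    rw [poch_succ, ih (Nat.le_of_succ_le hk)]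
    have h1 : (n.choose (k+1) : ℂ) * ((k : ℂ) + 1) = (n.choose k : ℂ) * ((n : ℂ) - k) := by
      have h2 := Nat.choose_succ_right_eq n k
      have h3 : ((n.choose (k+1) * (k+1) : ℕ) : ℂ) = ((n.choose k * (n - k) : ℕ) : ℂ) := by
        exact_mod_cast congrArg (Nat.cast : ℕ → ℂ) h2
      push_cast [Nat.cast_sub (Nat.le_of_succ_le hk)] at h3
      exact_mod_cast h3
    have hf : (Nat.factorial (k+1) : ℂ) = (Nat.factorial k : ℂ) * ((k : ℂ) + 1) := by
      rw [Nat.factorial_succ]; push_cast; ring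
    rw [hf]
    have : -(n : ℂ) + (k : ℂ) = -(((n : ℂ) - k)) := by ring
    rw [this]
    calc (-1) ^ k * (Nat.factorial k : ℂ) * (n.choose k) * -((n:ℂ) - k)
        = (-1)^(k+1) * (Nat.factorial k : ℂ) * ((n.choose k : ℂ) * ((n:ℂ) - k)) := by ring
      _ = (-1)^(k+1) * (Nat.factorial k : ℂ) * ((n.choose (k+1) : ℂ) * ((k:ℂ)+1)) := by rw [h1]
      _ = (-1) ^ (k + 1) * ((Nat.factorial k : ℂ) * ((k:ℂ)+1)) * (n.choose (k+1)) := by ring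

lemma vandermonde (u v : ℂ) : ∀ m : ℕ,
    poch (u + v) m = ∑ j ∈ range (m + 1), (m.choose j : ℂ) * poch u j * poch v (m - j) := by
  intro m
  induction m with
  | zero => simp [poch_zero]
  | succ m ih =>
    rw [poch_succ, ih, Finset.sum_mul]
    have step : ∀ j ∈ range (m + 1),
        (m.choose j : ℂ) * poch u j * poch v (m - j) * (u + v + m)
        = (m.choose j : ℂ) * poch u (j+1) * poch v (m - j)
          + (m.choose j : ℂ) * poch u j * poch v (m - j + 1) := by
      intro j hj
      rw [Finset.mem_range] at hj
      have hc : ((m - j : ℕ) : ℂ) = (m : ℂ) - j := by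
        rw [Nat.cast_sub (by omega)]
      rw [poch_succ, poch_succ, hc]
      ring
    rw [Finset.sum_congr rfl step, Finset.sum_add_distrib]
    -- A + B where A = ∑ C(m,j) (u)_{j+1} (v)_{m-j}, B = ∑ C(m,j)(u)_j (v)_{m-j+1}
    -- target: ∑_{j ∈ range (m+2)} C(m+1,j) (u)_j (v)_{m+1-j}
    rw [Finset.sum_range_succ' (fun j => ((m+1).choose j : ℂ) * poch u j * poch v (m + 1 - j)) (m+1)]
    simp only [Nat.choose_zero_right, Nat.cast_one, one_mul, poch_zero, Nat.sub_zero]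
    have expand : ∀ j ∈ range (m + 1),
        (((m+1).choose (j+1) : ℕ) : ℂ) * poch u (j+1) * poch v (m + 1 - (j+1))
        = (m.choose j : ℂ) * poch u (j+1) * poch v (m - j)
          + (m.choose (j+1) : ℂ) * poch u (j+1) * poch v (m - j) := by
      intro j hj
      have : (m+1).choose (j+1) = m.choose j + m.choose (j+1) := Nat.choose_succ_succ m j
      rw [this]
      have : m + 1 - (j + 1) = m - j := by omega
      rw [this]
      push_cast
      ring
    rw [Finset.sum_congr rfl expand, Finset.sum_add_distrib]
    -- now: goal  A + B = (∑ C(m,j)(u)_{j+1}(v)_{m-j} + ∑ C(m,j+1)(u)_{j+1}(v)_{m-j}) + (v)_{m+1}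
    have hB : ∑ j ∈ range (m + 1), (m.choose j : ℂ) * poch u j * poch v (m - j + 1)
        = ∑ j ∈ range (m + 1), (m.choose (j+1) : ℂ) * poch u (j+1) * poch v (m - j) + poch v (m+1) := by
      rw [Finset.sum_range_succ' (fun j => (m.choose j : ℂ) * poch u j * poch v (m - j + 1)) m]
      simp only [Nat.choose_zero_right, Nat.cast_one, one_mul, poch_zero, Nat.sub_zero]
      congr 1
      rw [Finset.sum_range_succ, Nat.choose_succ_self]
      simp only [Nat.cast_zero, zero_mul, add_zero]
      refine Finset.sum_congr rfl fun j hj => ?_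
      rw [Finset.mem_range] at hj
      have h1 : m - (j + 1) + 1 = m - j := by omega
      rw [h1]
    rw [hB]
    ring

lemma sum_triangle (n : ℕ) (f : ℕ → ℕ → ℂ) :
    ∑ k ∈ range (n + 1), ∑ j ∈ range (n + 1 - k), f k j
    = ∑ m ∈ range (n + 1), ∑ k ∈ range (m + 1), f k (m - k) := by
  induction n with
  | zero => simp
  | succ n ih =>
    have split : ∀ k ∈ range (n + 2), ∑ j ∈ range (n + 2 - k), f k j
        = ∑ j ∈ range (n + 1 - k), f k j + (if k ≤ n + 1 then f k (n + 1 - k) else 0) := by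
      intro k hk
      rw [Finset.mem_range] at hk
      have hk' : k ≤ n + 1 := by omega
      rw [if_pos hk']
      have : n + 2 - k = (n + 1 - k) + 1 := by omega
      rw [this, Finset.sum_range_succ]
    rw [Finset.sum_congr rfl split, Finset.sum_add_distrib]
    have h1 : ∑ k ∈ range (n + 2), ∑ j ∈ range (n + 1 - k), f k j
        = ∑ k ∈ range (n + 1), ∑ j ∈ range (n + 1 - k), f k j := by
      rw [Finset.sum_range_succ]
      simp
    have h2 : ∑ k ∈ range (n + 2), (if k ≤ n + 1 then f k (n + 1 - k) else 0)
        = ∑ k ∈ range (n + 2), f k (n + 1 - k) := by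
      refine Finset.sum_congr rfl fun k hk => ?_
      rw [Finset.mem_range] at hk
      rw [if_pos (by omega)]
    rw [h1, h2, ih, Finset.sum_range_succ (fun m => ∑ k ∈ range (m + 1), f k (m - k)) (n+1)]

lemma poch_diff (y : ℂ) (j : ℕ) :
    poch (y + 1) (j + 1) - poch y (j + 1) = (j + 1) * poch (y + 1) j := by
  rw [poch_succ, poch_succ']
  ring

lemma delta (r : ℕ) : ∀ (i : ℕ) (x : ℂ),
    ∑ k ∈ range (i + 1), (-1) ^ k * (i.choose k : ℂ) * poch (x + k) r
    = (-1) ^ i * (∏ t ∈ range i, ((r : ℂ) - t)) * poch (x + i) (r - i) := by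
  intro i
  induction i with
  | zero => intro x; simp [poch]
  | succ i ih =>
    intro x
    -- Step 1: S(i+1,x) = S(i,x) - S(i,x+1)
    have pascal : ∑ k ∈ range (i + 2), (-1) ^ k * ((i+1).choose k : ℂ) * poch (x + k) r
        = (∑ k ∈ range (i + 1), (-1) ^ k * (i.choose k : ℂ) * poch (x + k) r)
        - (∑ k ∈ range (i + 1), (-1) ^ k * (i.choose k : ℂ) * poch ((x + 1) + k) r) := by
      rw [Finset.sum_range_succ' (fun k => (-1:ℂ) ^ k * ((i+1).choose k : ℂ) * poch (x + k) r) (i+1)]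
      have expand : ∀ k ∈ range (i + 1),
          (-1:ℂ) ^ (k+1) * (((i+1).choose (k+1) : ℕ) : ℂ) * poch (x + ((k+1 : ℕ) : ℂ)) r
          = -((-1) ^ k * (i.choose k : ℂ) * poch ((x + 1) + k) r)
            + (-1) ^ (k+1) * (i.choose (k+1) : ℂ) * poch (x + ((k+1 : ℕ) : ℂ)) r := by
        intro k hk
        have harg : x + ((k+1 : ℕ) : ℂ) = (x + 1) + (k : ℂ) := by push_cast; ring
        rw [harg, Nat.choose_succ_succ]
        push_cast
        ring
      rw [Finset.sum_congr rfl expand, Finset.sum_add_distrib]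
      have hthird : ∑ k ∈ range (i + 1), (-1:ℂ) ^ (k+1) * (i.choose (k+1) : ℂ) * poch (x + (k+1 : ℕ)) r
          = (∑ k ∈ range (i + 1), (-1) ^ k * (i.choose k : ℂ) * poch (x + k) r) - poch x r := by
        rw [eq_sub_iff_add_eq]
        rw [Finset.sum_range_succ' (fun k => (-1:ℂ) ^ k * (i.choose k : ℂ) * poch (x + k) r) i]
        rw [Finset.sum_range_succ (fun k => (-1:ℂ) ^ (k+1) * (i.choose (k+1) : ℂ) * poch (x + (k+1 : ℕ)) r) i]
        rw [Nat.choose_succ_self]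
        simp [poch_zero]
      rw [hthird]
      simp only [pow_zero, Nat.choose_zero_right, Nat.cast_one, one_mul, Nat.cast_zero, add_zero]
      have : ∑ k ∈ range (i + 1), -((-1:ℂ) ^ k * (i.choose k : ℂ) * poch ((x+1) + k) r)
          = -∑ k ∈ range (i + 1), (-1:ℂ) ^ k * (i.choose k : ℂ) * poch ((x+1) + k) r := by
        rw [Finset.sum_neg_distrib]
      rw [this]
      ring
    rw [pascal, ih x, ih (x+1)]
    -- now combine
    by_cases hir : i < r
    · have hr1 : r - i = (r - (i+1)) + 1 := by omega
      have harg : (x + 1) + (i : ℂ) = (x + (i:ℂ)) + 1 := by ring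
      rw [harg, hr1]
      have hd := poch_diff (x + (i : ℂ)) (r - (i+1))
      have hfall : (∏ t ∈ range (i+1), ((r : ℂ) - t)) = (∏ t ∈ range i, ((r : ℂ) - t)) * ((r:ℂ) - i) := by
        rw [Finset.prod_range_succ]
      have hcast : ((r - (i+1) : ℕ) : ℂ) + 1 = (r : ℂ) - i := by
        rw [Nat.cast_sub (by omega)]; push_cast; ring
      have harg2 : x + ((i:ℕ)+1 : ℕ) = (x + (i:ℂ)) + 1 := by push_cast; ring
      rw [hfall, harg2]
      calc ((-1:ℂ) ^ i * ∏ t ∈ range i, ((r:ℂ) - ↑t)) * poch (x + ↑i) (r - (i+1) + 1) -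
            ((-1:ℂ) ^ i * ∏ t ∈ range i, ((r:ℂ) - ↑t)) * poch (x + ↑i + 1) (r - (i+1) + 1)
          = -(((-1:ℂ)) ^ i * ∏ t ∈ range i, ((r:ℂ) - ↑t)) *
              (poch (x + ↑i + 1) (r - (i+1) + 1) - poch (x + ↑i) (r - (i+1) + 1)) := by ring
        _ = -(((-1:ℂ)) ^ i * ∏ t ∈ range i, ((r:ℂ) - ↑t)) *
              ((((r - (i+1) : ℕ) : ℂ) + 1) * poch (x + ↑i + 1) (r - (i+1))) := by rw [hd]
        _ = (-1) ^ (i+1) * ((∏ t ∈ range i, ((r:ℂ) - ↑t)) * ((r:ℂ) - i)) * poch (x + ↑i + 1) (r - (i+1)) := by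
              rw [hcast]; ring
    · -- i ≥ r : both sides are zero
      have hz : r - i = 0 := by omega
      have hz2 : r - (i+1) = 0 := by omega
      have hfall0 : (∏ t ∈ range (i+1), ((r : ℂ) - t)) = 0 := by
        refine Finset.prod_eq_zero (Finset.mem_range.mpr (by omega : r < i + 1)) ?_
        simp
      rw [hz, hz2, hfall0, poch_zero, poch_zero, poch_zero]
      ring

lemma expandG (n : ℕ) (g u : ℕ → ℂ) (v : ℂ) :
    ∑ k ∈ range (n + 1), g k * poch (u k + v) (n - k)
    = ∑ m ∈ range (n + 1),
        (∑ k ∈ range (m + 1), g k * ((n - k).choose (m - k) : ℂ) * poch (u k) (m - k)) *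
          poch v (n - m) := by
  have step1 : ∀ k ∈ range (n + 1), g k * poch (u k + v) (n - k)
      = ∑ j ∈ range (n + 1 - k), g k * (((n-k).choose j : ℕ) : ℂ) * poch (u k) j * poch v (n - k - j) := by
    intro k hk
    rw [Finset.mem_range] at hk
    rw [vandermonde, Finset.mul_sum]
    have : n - k + 1 = n + 1 - k := by omega
    rw [this]
    refine Finset.sum_congr rfl fun j hj => ?_
    ring
  rw [Finset.sum_congr rfl step1,
    sum_triangle n (fun k j => g k * (((n-k).choose j : ℕ) : ℂ) * poch (u k) j * poch v (n - k - j))]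
  refine Finset.sum_congr rfl fun m hm => ?_
  rw [Finset.mem_range] at hm
  rw [Finset.sum_mul]
  refine Finset.sum_congr rfl fun k hk => ?_
  rw [Finset.mem_range] at hk
  have : n - k - (m - k) = n - m := by omega
  rw [this]

lemma expandG2 (m : ℕ) (g w : ℕ → ℂ) (c : ℂ) :
    ∑ k ∈ range (m + 1), g k * poch c k * poch ((c + k) + w k) (m - k)
    = ∑ i ∈ range (m + 1),
        (∑ k ∈ range (i + 1), g k * ((m - k).choose (i - k) : ℂ) * poch (w k) (m - i)) *
          poch c i := by
  have step1 : ∀ k ∈ range (m + 1), g k * poch c k * poch ((c + k) + w k) (m - k)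
      = ∑ j ∈ range (m + 1 - k),
          g k * (((m-k).choose j : ℕ) : ℂ) * (poch c k * poch (c + k) j) * poch (w k) (m - k - j) := by
    intro k hk
    rw [Finset.mem_range] at hk
    rw [vandermonde, Finset.mul_sum]
    have : m - k + 1 = m + 1 - k := by omega
    rw [this]
    refine Finset.sum_congr rfl fun j hj => ?_
    ring
  rw [Finset.sum_congr rfl step1,
    sum_triangle m (fun k j => g k * (((m-k).choose j : ℕ) : ℂ) * (poch c k * poch (c + k) j) * poch (w k) (m - k - j))]
  refine Finset.sum_congr rfl fun i hi => ?_
  rw [Finset.mem_range] at hi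
  rw [Finset.sum_mul]
  refine Finset.sum_congr rfl fun k hk => ?_
  rw [Finset.mem_range] at hk
  have h1 : m - k - (i - k) = m - i := by omega
  have h2 : poch c k * poch (c + k) (i - k) = poch c i := by
    rw [← poch_add]
    congr 1
    omega
  rw [h1, h2]
  ring

lemma neg_one_pow_sub_nat {m k : ℕ} (h : k ≤ m) : (-1 : ℂ) ^ (m - k) = (-1) ^ m * (-1) ^ k := by
  have h1 : (-1 : ℂ) ^ m = (-1) ^ (m - k) * (-1) ^ k := by
    rw [← pow_add, Nat.sub_add_cancel h]
  rw [h1, mul_assoc, ← pow_add, ← two_mul, pow_mul, neg_one_sq, one_pow, mul_one]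

lemma lemmaM (m : ℕ) (c : ℂ) :
    ∑ k ∈ range (m + 1), (m.choose k : ℂ) * poch c k * poch (-c - k) (m - k)
    = ∑ k ∈ range (m + 1), (-1) ^ k * (m.choose k : ℂ) * poch c k * poch (c + 2 * k) (m - k) := by
  have hL : ∑ k ∈ range (m + 1), (m.choose k : ℂ) * poch c k * poch (-c - k) (m - k)
      = ∑ k ∈ range (m + 1), ((-1 : ℂ) ^ m * ((-1) ^ k * (m.choose k : ℂ))) * poch c k *
          poch ((c + k) + ((1 - (m : ℂ)) + k)) (m - k) := by
    refine Finset.sum_congr rfl fun k hk => ?_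
    rw [Finset.mem_range] at hk
    have hk' : k ≤ m := by omega
    have hrefl : poch (-c - k) (m - k)
        = (-1) ^ (m - k) * poch ((c + k) + ((1 - (m : ℂ)) + k)) (m - k) := by
      rw [poch_reflect (-c - k) (m - k)]
      congr 2
      rw [Nat.cast_sub hk']
      ring
    rw [hrefl, neg_one_pow_sub_nat hk']
    ring
  have hR : ∑ k ∈ range (m + 1), (-1 : ℂ) ^ k * (m.choose k : ℂ) * poch c k * poch (c + 2 * k) (m - k)
      = ∑ k ∈ range (m + 1), ((-1 : ℂ) ^ k * (m.choose k : ℂ)) * poch c k *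
          poch ((c + k) + ((0 : ℂ) + k)) (m - k) := by
    refine Finset.sum_congr rfl fun k hk => ?_
    have : (c + k) + ((0 : ℂ) + k) = c + 2 * k := by ring
    rw [this]
  rw [hL, hR, expandG2 m (fun k => (-1 : ℂ) ^ m * ((-1) ^ k * (m.choose k : ℂ))) (fun k => (1 - (m : ℂ)) + k) c,
    expandG2 m (fun k => (-1 : ℂ) ^ k * (m.choose k : ℂ)) (fun k => (0 : ℂ) + k) c]
  refine Finset.sum_congr rfl fun i hi => ?_
  rw [Finset.mem_range] at hi
  have hi' : i ≤ m := by omega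
  congr 1
  -- inner sums
  have collapse : ∀ k ∈ range (i + 1),
      (m.choose k : ℂ) * ((m - k).choose (i - k) : ℂ) = (m.choose i : ℂ) * (i.choose k : ℂ) := by
    intro k hk
    rw [Finset.mem_range] at hk
    have := Nat.choose_mul (n := m) (by omega : k ≤ i)
    exact_mod_cast (congrArg (Nat.cast : ℕ → ℂ) this).symm
  have hL2 : ∑ k ∈ range (i + 1),
        ((-1 : ℂ) ^ m * ((-1) ^ k * (m.choose k : ℂ))) * ((m - k).choose (i - k) : ℂ) *
          poch ((1 - (m : ℂ)) + k) (m - i)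
      = (-1 : ℂ) ^ m * (m.choose i : ℂ) *
          ∑ k ∈ range (i + 1), (-1) ^ k * (i.choose k : ℂ) * poch ((1 - (m : ℂ)) + k) (m - i) := by
    rw [Finset.mul_sum]
    refine Finset.sum_congr rfl fun k hk => ?_
    have h2 : (m.choose k : ℂ) * ((m - k).choose (i - k) : ℂ) = (m.choose i : ℂ) * (i.choose k : ℂ) :=
      collapse k hk
    calc ((-1 : ℂ) ^ m * ((-1) ^ k * (m.choose k : ℂ))) * ((m - k).choose (i - k) : ℂ) *
          poch ((1 - (m : ℂ)) + k) (m - i)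
        = (-1 : ℂ) ^ m * (-1) ^ k * ((m.choose k : ℂ) * ((m - k).choose (i - k) : ℂ)) *
          poch ((1 - (m : ℂ)) + k) (m - i) := by ring
      _ = (-1 : ℂ) ^ m * (-1) ^ k * ((m.choose i : ℂ) * (i.choose k : ℂ)) *
          poch ((1 - (m : ℂ)) + k) (m - i) := by rw [h2]
      _ = (-1:ℂ) ^ m * (m.choose i : ℂ) * ((-1) ^ k * (i.choose k : ℂ) * poch ((1 - (m : ℂ)) + k) (m - i)) := by ring
  have hR2 : ∑ k ∈ range (i + 1),
        ((-1 : ℂ) ^ k * (m.choose k : ℂ)) * ((m - k).choose (i - k) : ℂ) *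
          poch ((0 : ℂ) + k) (m - i)
      = (m.choose i : ℂ) *
          ∑ k ∈ range (i + 1), (-1) ^ k * (i.choose k : ℂ) * poch ((0 : ℂ) + k) (m - i) := by
    rw [Finset.mul_sum]
    refine Finset.sum_congr rfl fun k hk => ?_
    have h2 := collapse k hk
    calc ((-1 : ℂ) ^ k * (m.choose k : ℂ)) * ((m - k).choose (i - k) : ℂ) * poch ((0 : ℂ) + k) (m - i)
        = (-1 : ℂ) ^ k * ((m.choose k : ℂ) * ((m - k).choose (i - k) : ℂ)) * poch ((0 : ℂ) + k) (m - i) := by ring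
      _ = (-1 : ℂ) ^ k * ((m.choose i : ℂ) * (i.choose k : ℂ)) * poch ((0 : ℂ) + k) (m - i) := by rw [h2]
      _ = (m.choose i : ℂ) * ((-1) ^ k * (i.choose k : ℂ) * poch ((0 : ℂ) + k) (m - i)) := by ring
  rw [hL2, hR2, delta (m - i) i (1 - (m : ℂ)), delta (m - i) i (0 : ℂ)]
  -- now the scalar comparison
  by_cases h2i : 2 * i ≤ m
  · have hc1 : ((m - i : ℕ) : ℂ) = (m : ℂ) - i := by rw [Nat.cast_sub hi']
    have hsub : m - i - i = m - 2 * i := by omega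
    have hrefl : poch ((1 - (m : ℂ)) + i) (m - 2 * i)
        = (-1) ^ (m - 2 * i) * poch ((0 : ℂ) + i) (m - 2 * i) := by
      rw [poch_reflect ((1 - (m : ℂ)) + i) (m - 2 * i)]
      congr 2
      rw [Nat.cast_sub h2i]
      push_cast
      ring
    rw [hsub, hrefl]
    have hsign : (-1 : ℂ) ^ m * (-1 : ℂ) ^ (m - 2 * i) = 1 := by
      rw [← pow_add]
      have : m + (m - 2 * i) = 2 * (m - i) := by omega
      rw [this, pow_mul, neg_one_sq, one_pow]
    calc (-1:ℂ) ^ m * (m.choose i : ℂ) * ((-1) ^ i * (∏ t ∈ range i, (((m - i : ℕ) : ℂ) - t)) *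
            ((-1) ^ (m - 2*i) * poch ((0:ℂ) + i) (m - 2*i)))
        = ((-1:ℂ) ^ m * (-1) ^ (m - 2*i)) * ((m.choose i : ℂ) * ((-1) ^ i *
            (∏ t ∈ range i, (((m - i : ℕ) : ℂ) - t)) * poch ((0:ℂ) + i) (m - 2*i))) := by ring
      _ = (m.choose i : ℂ) * ((-1) ^ i * (∏ t ∈ range i, (((m - i : ℕ) : ℂ) - t)) *
            poch ((0:ℂ) + i) (m - 2*i)) := by rw [hsign]; ring
  · have hfall : (∏ t ∈ range i, (((m - i : ℕ) : ℂ) - t)) = 0 := by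
      refine Finset.prod_eq_zero (Finset.mem_range.mpr (by omega : m - i < i)) ?_
      simp
    rw [hfall]
    ring

lemma lemmaFIN (n : ℕ) (c x : ℂ) :
    ∑ k ∈ range (n + 1), (-1) ^ k * (n.choose k : ℂ) * poch c k *
        poch ((2 * c + 1 - n - x) + 2 * k) (n - k)
    = (-1) ^ n * ∑ k ∈ range (n + 1), (-1) ^ k * (n.choose k : ℂ) * poch c k *
        poch (x + 2 * k) (n - k) := by
  have hL : ∑ k ∈ range (n + 1), (-1 : ℂ) ^ k * (n.choose k : ℂ) * poch c k *
        poch ((2 * c + 1 - n - x) + 2 * k) (n - k)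
      = (-1 : ℂ) ^ n * ∑ k ∈ range (n + 1), ((n.choose k : ℂ) * poch c k) *
          poch ((-c - k) + (x - c)) (n - k) := by
    rw [Finset.mul_sum]
    refine Finset.sum_congr rfl fun k hk => ?_
    rw [Finset.mem_range] at hk
    have hk' : k ≤ n := by omega
    have hrefl : poch ((2 * c + 1 - n - x) + 2 * k) (n - k)
        = (-1) ^ (n - k) * poch ((-c - k) + (x - c)) (n - k) := by
      rw [poch_reflect ((2 * c + 1 - n - x) + 2 * k) (n - k)]
      congr 2
      rw [Nat.cast_sub hk']
      ring
    rw [hrefl, neg_one_pow_sub_nat hk']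
    have hkk : (-1 : ℂ) ^ k * (-1 : ℂ) ^ k = 1 := by
      rw [← pow_add, ← two_mul, pow_mul, neg_one_sq, one_pow]
    calc (-1:ℂ) ^ k * (n.choose k : ℂ) * poch c k * ((-1)^n * (-1)^k * poch ((-c - k) + (x - c)) (n - k))
        = ((-1:ℂ)^k * (-1)^k) * ((-1)^n * ((n.choose k : ℂ) * poch c k * poch ((-c - k) + (x - c)) (n - k))) := by ring
      _ = (-1:ℂ)^n * ((n.choose k : ℂ) * poch c k * poch ((-c - k) + (x - c)) (n - k)) := by rw [hkk]; ring
  have hR : ∑ k ∈ range (n + 1), (-1 : ℂ) ^ k * (n.choose k : ℂ) * poch c k *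
        poch (x + 2 * k) (n - k)
      = ∑ k ∈ range (n + 1), ((-1 : ℂ) ^ k * (n.choose k : ℂ) * poch c k) *
          poch ((c + 2 * k) + (x - c)) (n - k) := by
    refine Finset.sum_congr rfl fun k hk => ?_
    have : (c + 2 * k) + (x - c) = x + 2 * k := by ring
    rw [this]
  rw [hL, hR,
    expandG n (fun k => (n.choose k : ℂ) * poch c k) (fun k => -c - k) (x - c),
    expandG n (fun k => (-1 : ℂ) ^ k * (n.choose k : ℂ) * poch c k) (fun k => c + 2 * k) (x - c)]
  congr 1
  refine Finset.sum_congr rfl fun m hm => ?_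
  rw [Finset.mem_range] at hm
  have hm' : m ≤ n := by omega
  have collapse : ∀ k ∈ range (m + 1),
      (n.choose k : ℂ) * ((n - k).choose (m - k) : ℂ) = (n.choose m : ℂ) * (m.choose k : ℂ) := by
    intro k hk
    rw [Finset.mem_range] at hk
    have := Nat.choose_mul (n := n) (by omega : k ≤ m)
    exact_mod_cast (congrArg (Nat.cast : ℕ → ℂ) this).symm
  have hinner1 : ∑ k ∈ range (m + 1),
        ((n.choose k : ℂ) * poch c k) * ((n - k).choose (m - k) : ℂ) * poch (-c - k) (m - k)
      = (n.choose m : ℂ) * ∑ k ∈ range (m + 1), (m.choose k : ℂ) * poch c k * poch (-c - k) (m - k) := by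
    rw [Finset.mul_sum]
    refine Finset.sum_congr rfl fun k hk => ?_
    have h2 := collapse k hk
    calc ((n.choose k : ℂ) * poch c k) * ((n - k).choose (m - k) : ℂ) * poch (-c - k) (m - k)
        = ((n.choose k : ℂ) * ((n - k).choose (m - k) : ℂ)) * (poch c k * poch (-c - k) (m - k)) := by ring
      _ = ((n.choose m : ℂ) * (m.choose k : ℂ)) * (poch c k * poch (-c - k) (m - k)) := by rw [h2]
      _ = (n.choose m : ℂ) * ((m.choose k : ℂ) * poch c k * poch (-c - k) (m - k)) := by ring
  have hinner2 : ∑ k ∈ range (m + 1),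
        ((-1 : ℂ) ^ k * (n.choose k : ℂ) * poch c k) * ((n - k).choose (m - k) : ℂ) * poch (c + 2 * k) (m - k)
      = (n.choose m : ℂ) * ∑ k ∈ range (m + 1), (-1 : ℂ) ^ k * (m.choose k : ℂ) * poch c k * poch (c + 2 * k) (m - k) := by
    rw [Finset.mul_sum]
    refine Finset.sum_congr rfl fun k hk => ?_
    have h2 := collapse k hk
    calc ((-1 : ℂ) ^ k * (n.choose k : ℂ) * poch c k) * ((n - k).choose (m - k) : ℂ) * poch (c + 2 * k) (m - k)
        = (-1:ℂ)^k * ((n.choose k : ℂ) * ((n - k).choose (m - k) : ℂ)) * (poch c k * poch (c + 2*k) (m - k)) := by ring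
      _ = (-1:ℂ)^k * ((n.choose m : ℂ) * (m.choose k : ℂ)) * (poch c k * poch (c + 2*k) (m - k)) := by rw [h2]
      _ = (n.choose m : ℂ) * ((-1:ℂ) ^ k * (m.choose k : ℂ) * poch c k * poch (c + 2*k) (m - k)) := by ring
  rw [hinner1, hinner2, lemmaM m c]

lemma stepC (n : ℕ) (a c : ℂ) (h : poch (a - (n : ℂ)) (2 * n) ≠ 0) :
    poch (1 - a) n * ∑ k ∈ range (n + 1),
      (poch (-(n : ℂ)) k * poch a k * poch c k) /
        ((Nat.factorial k : ℂ) * poch ((a - (n : ℂ)) / 2) k *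
          poch ((1 + a - (n : ℂ)) / 2) k) * (1 / 4 : ℂ) ^ k
    = (-1) ^ n * ∑ k ∈ range (n + 1),
        (-1) ^ k * (n.choose k : ℂ) * poch c k * poch ((a - (n : ℂ)) + 2 * k) (n - k) := by
  rw [Finset.mul_sum, Finset.mul_sum]
  refine Finset.sum_congr rfl fun k hk => ?_
  rw [Finset.mem_range] at hk
  have hk' : k ≤ n := by omega
  set u : ℂ := a - (n : ℂ) with hu
  have hdup : poch u (2 * k) = 4 ^ k * poch (u / 2) k * poch ((1 + a - (n : ℂ)) / 2) k := by
    rw [poch_dup]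
    congr 2
    ring
  have hrefl : poch (1 - a) n = (-1) ^ n * poch u n := by
    rw [poch_reflect (1 - a) n]
    congr 2
    ring
  have hkey : poch u n * poch a k = poch u (2 * k) * poch (u + 2 * k) (n - k) := by
    have h1 : poch u (n + k) = poch u n * poch a k := by
      rw [poch_add u n k]
      congr 2
      rw [hu]; ring
    have h2 : poch u (n + k) = poch u (2 * k) * poch (u + 2 * k) (n - k) := by
      have e : n + k = 2 * k + (n - k) := by omega
      rw [e, poch_add u (2 * k) (n - k)]
      congr 2
      push_cast; ring
    rw [← h1, h2]
  have hP : poch u (2 * k) ≠ 0 := poch_ne_zero_of_le (by omega) h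
  have hp1 : poch (u / 2) k ≠ 0 := by
    intro hz
    apply hP
    rw [hdup, hz]; ring
  have hp2 : poch ((1 + a - (n : ℂ)) / 2) k ≠ 0 := by
    intro hz
    apply hP
    rw [hdup, hz]; ring
  have hfac : (Nat.factorial k : ℂ) ≠ 0 := by
    exact_mod_cast Nat.factorial_ne_zero k
  have h4 : (4 : ℂ) ^ k ≠ 0 := pow_ne_zero _ (by norm_num)
  rw [poch_neg_nat n k hk', hrefl]
  rw [one_div, inv_pow]
  field_simp
  linear_combination ((n.choose k : ℂ) * poch c k) * hkey
    + ((n.choose k : ℂ) * poch c k * poch (u + 2 * (k : ℂ)) (n - k)) * hdup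

theorem stmt_16 (n : ℕ) (a c : ℂ)
    (han : poch (a - (n : ℂ)) (2 * n) ≠ 0) (h1a : poch (1 - a) n ≠ 0)
    (hca : poch (1 + 2 * c - a) (2 * n) ≠ 0) :
    ∑ k ∈ range (n + 1),
      (poch (-(n : ℂ)) k * poch a k * poch c k) /
        ((Nat.factorial k : ℂ) * poch ((a - (n : ℂ)) / 2) k *
          poch ((1 + a - (n : ℂ)) / 2) k) * (1 / 4 : ℂ) ^ k
    = poch (1 + 2 * c - a) n / poch (1 - a) n *
      ∑ k ∈ range (n + 1),
        (poch (-(n : ℂ)) k * poch (1 + 2 * c - a + (n : ℂ)) k * poch c k) /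
          ((Nat.factorial k : ℂ) * poch ((1 + 2 * c - a) / 2) k *
            poch ((2 + 2 * c - a) / 2) k) * (1 / 4 : ℂ) ^ k := by
  set a' : ℂ := 1 + 2 * c - a + (n : ℂ) with ha'
  have h' : poch (a' - (n : ℂ)) (2 * n) ≠ 0 := by
    rw [show a' - (n : ℂ) = 1 + 2 * c - a by rw [ha']; ring]
    exact hca
  have hA := stepC n a c han
  have hB := stepC n a' c h'
  -- rewrite hB's sums to match the statement
  have hS2 : ∑ k ∈ range (n + 1),
      (poch (-(n : ℂ)) k * poch a' k * poch c k) /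
        ((Nat.factorial k : ℂ) * poch ((a' - (n : ℂ)) / 2) k *
          poch ((1 + a' - (n : ℂ)) / 2) k) * (1 / 4 : ℂ) ^ k
      = ∑ k ∈ range (n + 1),
        (poch (-(n : ℂ)) k * poch (1 + 2 * c - a + (n : ℂ)) k * poch c k) /
          ((Nat.factorial k : ℂ) * poch ((1 + 2 * c - a) / 2) k *
            poch ((2 + 2 * c - a) / 2) k) * (1 / 4 : ℂ) ^ k := by
    refine Finset.sum_congr rfl fun k hk => ?_
    rw [show (a' - (n : ℂ)) / 2 = (1 + 2 * c - a) / 2 by rw [ha']; ring,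
      show (1 + a' - (n : ℂ)) / 2 = (2 + 2 * c - a) / 2 by rw [ha']; ring]
  have hRB : ∑ k ∈ range (n + 1),
      (-1 : ℂ) ^ k * (n.choose k : ℂ) * poch c k * poch ((a' - (n : ℂ)) + 2 * k) (n - k)
      = ∑ k ∈ range (n + 1),
      (-1 : ℂ) ^ k * (n.choose k : ℂ) * poch c k *
        poch ((2 * c + 1 - (n : ℂ) - (a - (n : ℂ))) + 2 * k) (n - k) := by
    refine Finset.sum_congr rfl fun k hk => ?_
    rw [show (a' - (n : ℂ)) + 2 * (k : ℂ) = (2 * c + 1 - (n : ℂ) - (a - (n : ℂ))) + 2 * k by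
      rw [ha']; ring]
  rw [hS2, hRB, lemmaFIN n c (a - (n : ℂ))] at hB
  have hrefl2 : poch (1 + 2 * c - a) n = (-1) ^ n * poch (1 - a') n := by
    rw [poch_reflect (1 + 2 * c - a) n]
    congr 2
    rw [ha']; ring
  rw [div_mul_eq_mul_div, eq_div_iff h1a]
  -- goal : P * Σ2 = Σ1 * Q  (or some ordering)
  calc (∑ k ∈ range (n + 1),
      (poch (-(n : ℂ)) k * poch a k * poch c k) /
        ((Nat.factorial k : ℂ) * poch ((a - (n : ℂ)) / 2) k *
          poch ((1 + a - (n : ℂ)) / 2) k) * (1 / 4 : ℂ) ^ k) * poch (1 - a) n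
      = (-1 : ℂ) ^ n * ∑ k ∈ range (n + 1),
        (-1) ^ k * (n.choose k : ℂ) * poch c k * poch ((a - (n : ℂ)) + 2 * k) (n - k) := by
        rw [← hA]; ring
    _ = poch (1 + 2 * c - a) n *
      ∑ k ∈ range (n + 1),
        (poch (-(n : ℂ)) k * poch (1 + 2 * c - a + (n : ℂ)) k * poch c k) /
          ((Nat.factorial k : ℂ) * poch ((1 + 2 * c - a) / 2) k *
            poch ((2 + 2 * c - a) / 2) k) * (1 / 4 : ℂ) ^ k := by
        rw [hrefl2]
        have := hB
        -- hB : poch (1 - a') n * Σ2 = (-1)^n * ((-1)^n * S2x)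
        calc (-1 : ℂ) ^ n * ∑ k ∈ range (n + 1),
            (-1) ^ k * (n.choose k : ℂ) * poch c k * poch ((a - (n : ℂ)) + 2 * k) (n - k)
            = ((-1 : ℂ) ^ n * (-1) ^ n) * ((-1 : ℂ) ^ n * ∑ k ∈ range (n + 1),
              (-1) ^ k * (n.choose k : ℂ) * poch c k * poch ((a - (n : ℂ)) + 2 * k) (n - k)) := by
              rw [← pow_add, ← two_mul, pow_mul, neg_one_sq, one_pow]; ring
          _ = (-1 : ℂ) ^ n * (poch (1 - a') n * ∑ k ∈ range (n + 1),
              (poch (-(n : ℂ)) k * poch (1 + 2 * c - a + (n : ℂ)) k * poch c k) /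
                ((Nat.factorial k : ℂ) * poch ((1 + 2 * c - a) / 2) k *
                  poch ((2 + 2 * c - a) / 2) k) * (1 / 4 : ℂ) ^ k) := by
              rw [hB]; ring
          _ = (-1 : ℂ) ^ n * poch (1 - a') n * ∑ k ∈ range (n + 1),
              (poch (-(n : ℂ)) k * poch (1 + 2 * c - a + (n : ℂ)) k * poch c k) /
                ((Nat.factorial k : ℂ) * poch ((1 + 2 * c - a) / 2) k *
                  poch ((2 + 2 * c - a) / 2) k) * (1 / 4 : ℂ) ^ k := by ring
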